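/- For any graph G on vertex set [n] and any positive integer k, the dilated stable set polytope kP_G contains an interior lattice point if and only if the all-ones vector (1,...,1) is an interior point of kP_G. -/

import Mathlib

open Finset

noncomputable section

/-- The dilation `kP` of a set `P ⊆ ℝ^ι`. -/
def dilate {ι : Type*} (k : ℕ) (P : Set (ι → ℝ)) : Set (ι → ℝ) :=
  (fun x => (k : ℝ) • x) '' P

/-- A point of `ℝ^ι` is a lattice point if all its coordinates are integers. -/
def IsLatticePt {ι : Type*} (x : ι → ℝ) : Prop := ∀ i, ∃ m : ℤ, x i = m

/-- The codegree of a (full-dimensional lattice) polytope `P ⊆ ℝ^ι`: the smallest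
positive integer `k` such that the interior of `kP` contains a lattice point. -/
def codeg {ι : Type*} (P : Set (ι → ℝ)) : ℕ :=
  sInf {k | 0 < k ∧ ∃ x, IsLatticePt x ∧ x ∈ interior (dilate k P)}

/-- The stable set polytope of a simple graph: the convex hull of the indicator
vectors of the stable (independent) sets of `G`. -/
def stablePolytope {V : Type*} (G : SimpleGraph V) : Set (V → ℝ) :=
  convexHull ℝ {x | ∃ S : Set V, (∀ u ∈ S, ∀ v ∈ S, ¬ G.Adj u v) ∧
    x = S.indicator (fun _ => (1 : ℝ))}

/-- Every point of the stable set polytope is coordinatewise nonnegative. -/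
lemma stable_nonneg {V : Type*} (G : SimpleGraph V) {x : V → ℝ}
    (hx : x ∈ stablePolytope G) (i : V) : 0 ≤ x i := by
  have h : stablePolytope G ⊆ {x : V → ℝ | ∀ j, 0 ≤ x j} := by
    apply convexHull_min
    · rintro y ⟨S, -, rfl⟩ j
      by_cases hj : j ∈ S <;> simp [Set.indicator_apply, hj]
    · intro a ha b hb s t hs ht hst j
      have := ha j; have := hb j
      simp only [Pi.add_apply, Pi.smul_apply, smul_eq_mul]
      nlinarith
  exact h hx i

/-- Zeroing out one coordinate preserves membership in the stable set polytope. -/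
lemma stable_zero_coord {V : Type*} [DecidableEq V] (G : SimpleGraph V) {x : V → ℝ}
    (hx : x ∈ stablePolytope G) (a : V) :
    (fun i => if i = a then 0 else x i) ∈ stablePolytope G := by
  have h : stablePolytope G ⊆
      {x : V → ℝ | (fun i => if i = a then 0 else x i) ∈ stablePolytope G} := by
    apply convexHull_min
    · rintro y ⟨S, hS, rfl⟩
      apply subset_convexHull
      refine ⟨S \ {a}, fun u hu v hv => hS u hu.1 v hv.1, ?_⟩
      funext i
      by_cases hia : i = a
      · subst hia; simp [Set.indicator_apply]
      · by_cases hiS : i ∈ S <;> simp [Set.indicator_apply, hia, hiS]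
    · intro p hp q hq s t hs ht hst
      have key : (fun i => if i = a then 0 else (s • p + t • q) i)
          = s • (fun i => if i = a then 0 else p i) + t • (fun i => if i = a then 0 else q i) := by
        funext i
        by_cases hia : i = a <;> simp [hia]
      rw [Set.mem_setOf_eq, key]
      exact (convex_convexHull ℝ _) hp hq hs ht hst
  exact h hx

/-- The stable set polytope is down-closed. -/
lemma stable_downclosed {V : Type*} [Fintype V] [DecidableEq V] (G : SimpleGraph V) {y z : V → ℝ}
    (hy : y ∈ stablePolytope G) (hz0 : ∀ i, 0 ≤ z i) (hzy : ∀ i, z i ≤ y i) :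
    z ∈ stablePolytope G := by
  have key : ∀ T : Finset V, (fun i => if i ∈ T then z i else y i) ∈ stablePolytope G := by
    intro T
    induction T using Finset.induction_on with
    | empty => simpa using hy
    | @insert a T ha ih =>
      set w : V → ℝ := fun i => if i ∈ T then z i else y i with hw
      have hwa : w a = y a := by simp [hw, ha]
      have hF : (fun i => if i = a then 0 else w i) ∈ stablePolytope G :=
        stable_zero_coord G ih a
      by_cases h0 : y a = 0
      · have hza : z a = 0 := le_antisymm (h0 ▸ hzy a) (hz0 a)
        have : (fun i => if i ∈ insert a T then z i else y i)
            = fun i => if i = a then 0 else w i := by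
          funext i
          by_cases hia : i = a
          · subst hia; simp [hza]
          · by_cases hiT : i ∈ T <;> simp [hw, hia, hiT, Finset.mem_insert]
        rw [this]; exact hF
      · have hya : 0 < y a := lt_of_le_of_ne (le_trans (hz0 a) (hzy a)) (Ne.symm h0)
        set t : ℝ := z a / y a with htdef
        have ht0 : 0 ≤ t := div_nonneg (hz0 a) hya.le
        have ht1 : t ≤ 1 := (div_le_one hya).2 (hzy a)
        have hconv : (fun i => if i ∈ insert a T then z i else y i)
            = t • w + (1 - t) • (fun i => if i = a then 0 else w i) := by
          funext i
          by_cases hia : i = a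
          · subst hia
            simp only [Pi.add_apply, Pi.smul_apply, smul_eq_mul, if_pos rfl,
              Finset.mem_insert, true_or, if_true, hwa]
            rw [htdef, mul_zero, add_zero, div_mul_cancel₀ _ hya.ne']
          · by_cases hiT : i ∈ T <;>
              · simp only [Pi.add_apply, Pi.smul_apply, smul_eq_mul, if_neg hia,
                  Finset.mem_insert, hia, hiT, hw, if_true, if_false, false_or, or_false]
                ring
        rw [hconv]
        exact (convex_convexHull ℝ _) ih hF ht0 (by linarith) (by ring)
  have := key Finset.univ
  simpa using this

lemma dilate_nonneg {V : Type*} (G : SimpleGraph V) {k : ℕ} {x : V → ℝ}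
    (hx : x ∈ dilate k (stablePolytope G)) (i : V) : 0 ≤ x i := by
  obtain ⟨p, hp, rfl⟩ := hx
  have := stable_nonneg G hp i
  simp only [Pi.smul_apply, smul_eq_mul]
  positivity

lemma dilate_downclosed {V : Type*} [Fintype V] [DecidableEq V] (G : SimpleGraph V)
    {k : ℕ} (hk : 0 < k) {c y : V → ℝ} (hc : c ∈ dilate k (stablePolytope G))
    (hy0 : ∀ i, 0 ≤ y i) (hyc : ∀ i, y i ≤ c i) : y ∈ dilate k (stablePolytope G) := by
  obtain ⟨p, hp, rfl⟩ := hc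
  have hkpos : (0:ℝ) < (k:ℝ) := by exact_mod_cast hk
  refine ⟨(k:ℝ)⁻¹ • y, ?_, ?_⟩
  · apply stable_downclosed G hp
    · intro i
      simp only [Pi.smul_apply, smul_eq_mul]
      exact mul_nonneg (by positivity) (hy0 i)
    · intro i
      have := hyc i
      simp only [Pi.smul_apply, smul_eq_mul] at this ⊢
      rw [inv_mul_le_iff₀ hkpos]
      exact this
  · show (k:ℝ) • ((k:ℝ)⁻¹ • y) = y
    rw [smul_smul, mul_inv_cancel₀ hkpos.ne', one_smul]

/-- For any graph `G` on `[n]` and positive integer `k`, `k·P_G` contains an interior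
lattice point iff the all-ones vector is an interior point of `k·P_G`. -/
theorem stmt0 {n : ℕ} (G : SimpleGraph (Fin n)) (k : ℕ) (hk : 0 < k) :
    (∃ x : Fin n → ℝ, IsLatticePt x ∧ x ∈ interior (dilate k (stablePolytope G))) ↔
      (fun _ => (1 : ℝ)) ∈ interior (dilate k (stablePolytope G)) := by
  constructor
  · rintro ⟨x, hlat, hx⟩
    obtain ⟨ε, hε, hball⟩ := Metric.isOpen_iff.mp isOpen_interior x hx
    -- every coordinate of x is at least 1
    have hx1 : ∀ i, 1 ≤ x i := by
      intro i
      obtain ⟨m, hm⟩ := hlat i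
      have hv : Function.update x i (x i - ε/2) ∈ interior (dilate k (stablePolytope G)) := by
        apply hball
        rw [Metric.mem_ball]
        rw [dist_pi_lt_iff hε]
        intro j
        by_cases hj : j = i
        · subst hj
          rw [Function.update_self, Real.dist_eq]
          have he : x j - ε/2 - x j = -(ε/2) := by ring
          rw [he, abs_neg, abs_of_pos (by linarith)]
          linarith
        · simp [Function.update_of_ne hj, Real.dist_eq, hε]
      have := dilate_nonneg G (interior_subset hv) i
      simp [Function.update_self] at this
      have hxi : 0 < x i := by linarith
      have hm1 : (1:ℤ) ≤ m := by
        have hm0 : ¬ m ≤ 0 := by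
          intro hle
          have : (m:ℝ) ≤ 0 := by exact_mod_cast hle
          rw [hm] at hxi; linarith
        omega
      rw [hm]; exact_mod_cast hm1
    -- ball around all-ones
    set δ := min ε 1 with hδ
    have hδpos : 0 < δ := lt_min hε one_pos
    refine mem_interior.2 ⟨Metric.ball (fun _ => (1:ℝ)) δ, ?_, Metric.isOpen_ball,
      Metric.mem_ball_self hδpos⟩
    intro y hy
    rw [Metric.mem_ball, dist_pi_lt_iff hδpos] at hy
    have hyd : ∀ i, |y i - 1| < δ := by
      intro i; have := hy i; rwa [Real.dist_eq] at this
    have hc : (fun i => x i + (y i - 1)) ∈ dilate k (stablePolytope G) := by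
      apply interior_subset
      apply hball
      rw [Metric.mem_ball, dist_pi_lt_iff hε]
      intro i
      rw [Real.dist_eq]
      have := hyd i
      have : |x i + (y i - 1) - x i| = |y i - 1| := by ring_nf
      rw [this]
      exact lt_of_lt_of_le (hyd i) (min_le_left _ _)
    apply dilate_downclosed G hk hc
    · intro i
      have := hyd i
      have h1 : y i - 1 > -δ := by
        cases abs_lt.mp this; linarith
      have : δ ≤ 1 := min_le_right _ _
      linarith
    · intro i
      have := hx1 i
      linarith
  · intro h
    exact ⟨fun _ => 1, fun i => ⟨1, by norm_num⟩, h⟩
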